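/- Assume a is strongly degenerate (SD). Let y : (0,1] → ℝ be differentiable with y' locally absolutely continuous on (0,1], y' ∈ L²(0,1), √a·y'' ∈ L²(0,1), and suppose that the function x ↦ a(x)·y''(x) coincides with a function in H²(0,1) whose continuous representative vanishes at x = 0, i.e. (a·y'')(0) = 0. Then lim_{δ→0⁺} δ·a(δ)·(y''(δ))² = 0. -/

import Mathlib

open Set Filter MeasureTheory Topology

/-- `a` is weakly degenerate at `0` (WD): `a ∈ C[0,1] ∩ C¹(0,1]`, `a 0 = 0`,
`a > 0` on `(0,1]`, and the degeneracy constant `K` satisfies `K ∈ (0,1)` together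
with `x * |a' x| ≤ K * a x` on `(0,1]`. -/
structure IsWeaklyDegenerate (a a' : ℝ → ℝ) (K : ℝ) : Prop where
  cont : ContinuousOn a (Set.Icc 0 1)
  deriv : ∀ x ∈ Set.Ioc (0:ℝ) 1, HasDerivWithinAt a (a' x) (Set.Ioc 0 1) x
  deriv_cont : ContinuousOn a' (Set.Ioc 0 1)
  zero : a 0 = 0
  pos : ∀ x ∈ Set.Ioc (0:ℝ) 1, 0 < a x
  K_pos : 0 < K
  K_lt_one : K < 1
  bound : ∀ x ∈ Set.Ioc (0:ℝ) 1, x * |a' x| ≤ K * a x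

/-- `a` is strongly degenerate at `0` (SD): `a ∈ C¹[0,1]`, `a 0 = 0`, `a > 0` on
`(0,1]`, and the degeneracy constant `K` satisfies `K ∈ [1,2)` together with
`x * |a' x| ≤ K * a x` on `(0,1]`. -/
structure IsStronglyDegenerate (a a' : ℝ → ℝ) (K : ℝ) : Prop where
  deriv : ∀ x ∈ Set.Icc (0:ℝ) 1, HasDerivWithinAt a (a' x) (Set.Icc 0 1) x
  deriv_cont : ContinuousOn a' (Set.Icc 0 1)
  zero : a 0 = 0
  pos : ∀ x ∈ Set.Ioc (0:ℝ) 1, 0 < a x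
  K_ge_one : 1 ≤ K
  K_lt_two : K < 2
  bound : ∀ x ∈ Set.Ioc (0:ℝ) 1, x * |a' x| ≤ K * a x

lemma sd_lower_bound (a a' : ℝ → ℝ) (K : ℝ)
    (hderiv : ∀ x ∈ Set.Icc (0:ℝ) 1, HasDerivWithinAt a (a' x) (Set.Icc 0 1) x)
    (hpos : ∀ x ∈ Set.Ioc (0:ℝ) 1, 0 < a x)
    (hK2 : K < 2)
    (hbound : ∀ x ∈ Set.Ioc (0:ℝ) 1, x * |a' x| ≤ K * a x) :
    ∀ x ∈ Set.Ioc (0:ℝ) 1, a 1 * x ^ 2 ≤ a x := by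
  intro x hx
  have hconta : ContinuousOn a (Set.Icc 0 1) := fun t ht => (hderiv t ht).continuousWithinAt
  have hsub : Set.Icc x 1 ⊆ Set.Icc 0 1 := Set.Icc_subset_Icc hx.1.le le_rfl
  have hmono : AntitoneOn (fun t => a t / t ^ 2) (Set.Icc x 1) := by
    apply antitoneOn_of_hasDerivWithinAt_nonpos (convex_Icc x 1)
      (f' := fun t => (a' t * t ^ 2 - a t * (2 * t)) / (t ^ 2) ^ 2)
    · exact ContinuousOn.div (hconta.mono hsub) (continuousOn_pow 2)
        (fun t ht => pow_ne_zero 2 (lt_of_lt_of_le hx.1 ht.1).ne')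
    · intro t ht
      rw [interior_Icc] at ht
      have ht01 : t ∈ Set.Ioc (0:ℝ) 1 := ⟨lt_trans hx.1 ht.1, ht.2.le⟩
      have hda : HasDerivAt a (a' t) t :=
        (hderiv t ⟨ht01.1.le, ht01.2⟩).hasDerivAt
          (Icc_mem_nhds ht01.1 ht.2)
      have hdp : HasDerivAt (fun s : ℝ => s ^ 2) (2 * t) t := by
        simpa using hasDerivAt_pow 2 t
      exact ((hda.div hdp (pow_ne_zero 2 ht01.1.ne')).hasDerivWithinAt)
    · intro t ht
      rw [interior_Icc] at ht
      have ht01 : t ∈ Set.Ioc (0:ℝ) 1 := ⟨lt_trans hx.1 ht.1, ht.2.le⟩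
      have h1 : t * a' t ≤ t * |a' t| :=
        mul_le_mul_of_nonneg_left (le_abs_self _) ht01.1.le
      have h2 := hbound t ht01
      have h3 := hpos t ht01
      have h4 : t * (t * a' t) ≤ t * (K * a t) :=
        mul_le_mul_of_nonneg_left (h1.trans h2) ht01.1.le
      have hnum : a' t * t ^ 2 - a t * (2 * t) ≤ 0 := by
        nlinarith [h4, mul_nonneg (mul_pos ht01.1 h3).le (sub_nonneg.2 hK2.le)]
      have hden : (0:ℝ) < (t ^ 2) ^ 2 := pow_pos (pow_pos ht01.1 2) 2
      exact div_nonpos_of_nonpos_of_nonneg hnum hden.le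
  have h := hmono ⟨le_rfl, hx.2⟩ ⟨hx.2, le_rfl⟩ hx.2
  simp only [one_pow, div_one] at h
  have hx2 : (0:ℝ) < x ^ 2 := pow_pos hx.1 2
  calc a 1 * x ^ 2 ≤ a x / x ^ 2 * x ^ 2 := by nlinarith
    _ = a x := by rw [div_mul_cancel₀ _ hx2.ne']

theorem lim_delta_a_ysecond_sq_SD
    (a a' : ℝ → ℝ) (K : ℝ) (hSD : IsStronglyDegenerate a a' K)
    (y y' y'' g g' g'' : ℝ → ℝ)
    (hy' : ∀ x ∈ Set.Ioc (0:ℝ) 1, HasDerivWithinAt y (y' x) (Set.Ioc 0 1) x)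
    (hy'AC : ∀ x ∈ Set.Ioc (0:ℝ) 1, ∀ z ∈ Set.Ioc (0:ℝ) 1,
      y' z - y' x = ∫ t in x..z, y'' t)
    (hy''loc : ∀ x ∈ Set.Ioc (0:ℝ) 1, MeasureTheory.IntegrableOn y'' (Set.Icc x 1))
    (hy'meas : MeasureTheory.AEStronglyMeasurable y'
      (MeasureTheory.volume.restrict (Set.Ioo 0 1)))
    (hy'L2 : MeasureTheory.IntegrableOn (fun x => (y' x) ^ 2) (Set.Ioo 0 1))
    (hy''meas : MeasureTheory.AEStronglyMeasurable y''
      (MeasureTheory.volume.restrict (Set.Ioo 0 1)))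
    (hayL2 : MeasureTheory.IntegrableOn (fun x => a x * (y'' x) ^ 2) (Set.Ioo 0 1))
    -- `x ↦ a x * y'' x` coincides on `(0,1]` with a function `g ∈ H²(0,1)`;
    -- `g` is `C¹` on `[0,1]` with derivative `g'`, `g'` is absolutely continuous with
    -- a.e. derivative `g'' ∈ L²(0,1)`, and the continuous representative satisfies `g 0 = 0`.
    (hg_eq : ∀ x ∈ Set.Ioc (0:ℝ) 1, g x = a x * y'' x)
    (hg_deriv : ∀ x ∈ Set.Icc (0:ℝ) 1, HasDerivWithinAt g (g' x) (Set.Icc 0 1) x)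
    (hg'AC : ∀ x ∈ Set.Icc (0:ℝ) 1, ∀ z ∈ Set.Icc (0:ℝ) 1,
      g' z - g' x = ∫ t in x..z, g'' t)
    (hg''L1 : MeasureTheory.IntegrableOn g'' (Set.Ioo 0 1))
    (hg''L2 : MeasureTheory.IntegrableOn (fun x => (g'' x) ^ 2) (Set.Ioo 0 1))
    (hg0 : g 0 = 0) :
    Filter.Tendsto (fun δ : ℝ => δ * a δ * (y'' δ) ^ 2) (nhdsWithin 0 (Set.Ioi 0)) (nhds 0) := by
  have hderiv := hSD.deriv
  have hpos := hSD.pos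
  have hK2 := hSD.K_lt_two
  have hbound := hSD.bound
  have ha1 : 0 < a 1 := hpos 1 ⟨zero_lt_one, le_rfl⟩
  have hlow := sd_lower_bound a a' K hderiv hpos hK2 hbound
  -- slope limit for g at 0
  have hslope : Tendsto (fun δ => g δ / δ) (𝓝[>] (0:ℝ)) (𝓝 (g' 0)) := by
    have h0 := (hasDerivWithinAt_iff_tendsto_slope).1 (hg_deriv 0 ⟨le_rfl, zero_le_one⟩)
    rw [Set.Icc_diff_left, nhdsWithin_Ioc_eq_nhdsGT zero_lt_one] at h0
    exact h0.congr (fun δ => by simp [slope_def_field, hg0])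
  -- δ^3 / a δ → 0
  have hcube : Tendsto (fun δ => δ ^ 3 / a δ) (𝓝[>] (0:ℝ)) (𝓝 0) := by
    have hg0' : Tendsto (fun δ : ℝ => δ / a 1) (𝓝[>] (0:ℝ)) (𝓝 0) := by
      have : Tendsto (fun δ : ℝ => δ / a 1) (𝓝 (0:ℝ)) (𝓝 (0 / a 1)) :=
        (continuous_id.div_const (a 1)).tendsto 0
      rw [zero_div] at this
      exact this.mono_left nhdsWithin_le_nhds
    apply squeeze_zero' ?_ ?_ hg0'
    · filter_upwards [Ioc_mem_nhdsGT_of_mem (Set.left_mem_Ico.2 zero_lt_one)] with δ hδ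
      exact div_nonneg (pow_nonneg hδ.1.le 3) (hpos δ hδ).le
    · filter_upwards [Ioc_mem_nhdsGT_of_mem (Set.left_mem_Ico.2 zero_lt_one)] with δ hδ
      have hap := hpos δ hδ
      rw [div_le_div_iff₀ hap ha1]
      nlinarith [hlow δ hδ, hδ.1]
  have hmain : Tendsto (fun δ => (g δ / δ) ^ 2 * (δ ^ 3 / a δ)) (𝓝[>] (0:ℝ))
      (𝓝 ((g' 0) ^ 2 * 0)) := (hslope.pow 2).mul hcube
  rw [mul_zero] at hmain
  refine hmain.congr' ?_
  filter_upwards [Ioc_mem_nhdsGT_of_mem (Set.left_mem_Ico.2 zero_lt_one)] with δ hδ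
  have hap := hpos δ hδ
  have h1 := hg_eq δ hδ
  have hne : a δ ≠ 0 := hap.ne'
  have hdne : δ ≠ 0 := hδ.1.ne'
  rw [h1]
  field_simp
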